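/- Let V₁, V₂, V₃, V₄ ∈ ℝ² and assume the projected quadrilateral is crossed with χ₁ an edge, i.e. δ₁·δ₄ > 0, δ₂·δ₃ > 0 and δ₁·δ₂ < 0. If det(V₁,V₂)·det(V₃,V₄) < 0 and det(V₂,V₃)·det(V₄,V₁) > 0, then there exists exactly one point (s,t) ∈ (0,1) × (0,1) with G(s,t) = (0,0); i.e., a unique sliding vector field is defined on the codimension-2 discontinuity Λ. -/

import Mathlib

/-- Determinant of two vectors in ℝ². -/
noncomputable def det2 (U W : ℝ × ℝ) : ℝ := U.1 * W.2 - U.2 * W.1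

/-- The canopy bilinear map G(s,t) = st·V₁ + (1-s)t·V₂ + (1-s)(1-t)·V₃ + s(1-t)·V₄. -/
noncomputable def Gmap (V₁ V₂ V₃ V₄ : ℝ × ℝ) (s t : ℝ) : ℝ × ℝ :=
  (s * t) • V₁ + ((1 - s) * t) • V₂ + ((1 - s) * (1 - t)) • V₃ + (s * (1 - t)) • V₄

lemma sign_lemma (d12 d13 d14 d23 d24 d34 : ℝ)
    (hP : d12*d34 - d13*d24 + d14*d23 = 0)
    (h1 : d12*d34 < 0) (h2 : d23*d14 < 0)
    (he1 : 0 < d12 - d13 + d23) (he2 : d23 - d24 + d34 < 0)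
    (he3 : d13 - d14 + d34 < 0) (he4 : 0 < d12 + d24 - d14) :
    d13 < 0 ∧ 0 < d24 ∧ 0 < d12 ∧ d34 < 0 := by
  have hprod : d13 * d24 < 0 := by nlinarith
  have h23ne : d23 ≠ 0 := fun h => by rw [h] at h2; simp at h2
  have h13 : d13 < 0 := by
    by_contra hge
    push_neg at hge
    have h13pos : 0 < d13 := lt_of_le_of_ne hge (by rintro rfl; simp at hprod)
    have h24neg : d24 < 0 := by nlinarith
    rcases lt_or_gt_of_ne h23ne with hneg | hpos
    · have h14 : 0 < d14 := by nlinarith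
      have h12 : 0 < d12 := by linarith
      have h34 : d34 < 0 := by nlinarith
      nlinarith [mul_pos he1 (by linarith : (0:ℝ) < -d34),
        mul_pos (by linarith : (0:ℝ) < d14 - d13 - d34) (by linarith : (0:ℝ) < -d23),
        mul_pos (by linarith : (0:ℝ) < d24 - d23 - d34) h13pos]
    · have h14 : d14 < 0 := by nlinarith
      have h34 : d34 < 0 := by linarith
      have h12 : 0 < d12 := by nlinarith
      nlinarith [mul_pos (by linarith : (0:ℝ) < d24 - d23 - d34) h12,
        mul_pos he4 hpos,
        mul_pos he1 (by linarith : (0:ℝ) < -d24)]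
  have h24 : 0 < d24 := by nlinarith
  have h12 : 0 < d12 := by
    by_contra hle
    push_neg at hle
    have h12neg : d12 < 0 := lt_of_le_of_ne hle (by rintro rfl; simp at h1)
    have h34pos : 0 < d34 := by nlinarith
    rcases lt_or_gt_of_ne h23ne with hneg | hpos
    · have h14 : 0 < d14 := by nlinarith
      nlinarith [mul_pos (by linarith : (0:ℝ) < d24 - d23 - d34) (by linarith : (0:ℝ) < -d12),
        mul_pos he1 h24,
        mul_pos he4 (by linarith : (0:ℝ) < -d23)]
    · have h14 : d14 < 0 := by nlinarith
      nlinarith [mul_pos (by linarith : (0:ℝ) < d14 - d13 - d34) hpos,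
        mul_pos (by linarith : (0:ℝ) < d24 - d23 - d34) (by linarith : (0:ℝ) < -d13),
        mul_pos he1 h34pos]
  exact ⟨h13, h24, h12, by nlinarith⟩

lemma quad_unique (a b c s s' : ℝ) (hs : a*s^2+b*s+c = 0) (hs' : a*s'^2+b*s'+c = 0)
    (h0 : 0 < s) (h1 : s < 1) (h0' : 0 < s') (h1' : s' < 1)
    (hsign : c * (a+b+c) < 0) : s' = s := by
  by_contra hne
  have hd : (s' - s) * (a*(s'+s) + b) = 0 := by linear_combination hs' - hs
  have hab : a*(s'+s) + b = 0 := by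
    rcases mul_eq_zero.mp hd with h | h
    · exact absurd (sub_eq_zero.mp h) hne
    · exact h
  have hc : c = a*s*s' := by linear_combination hs - s*hab
  have habc : a+b+c = a*(1-s)*(1-s') := by linear_combination hab + hc
  have key : c * (a+b+c) = a^2 * ((s*s') * ((1-s)*(1-s'))) := by rw [habc, hc]; ring
  rw [key] at hsign
  nlinarith [sq_nonneg a, mul_pos (mul_pos h0 h0')
    (mul_pos (sub_pos.mpr h1) (sub_pos.mpr h1'))]

lemma parallel_scalar (a1 a2 b1 b2 : ℝ) (h : a1*b2 - a2*b1 = 0)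
    (hB : ¬(b1 = 0 ∧ b2 = 0)) :
    ∃ l : ℝ, a1 = l*b1 ∧ a2 = l*b2 := by
  rcases eq_or_ne b1 0 with h1 | h1
  · have h2 : b2 ≠ 0 := fun h2 => hB ⟨h1, h2⟩
    refine ⟨a2/b2, ?_, by field_simp⟩
    subst h1
    have : a1 = 0 := by
      have h' : a1 * b2 = 0 := by linarith
      rcases mul_eq_zero.mp h' with h | h
      · exact h
      · exact absurd h h2
    simp [this]
  · refine ⟨a1/b1, by field_simp, ?_⟩
    field_simp
    nlinarith [h]

set_option maxHeartbeats 1000000 in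
lemma main_aux (V₁ V₂ V₃ V₄ : ℝ × ℝ)
    (h12 : 0 < det2 V₁ V₂) (h34 : det2 V₃ V₄ < 0)
    (h13 : det2 V₁ V₃ < 0) (h24 : 0 < det2 V₂ V₄)
    (hx : det2 V₂ V₃ * det2 V₁ V₄ < 0) :
    ∃! p : ℝ × ℝ, p.1 ∈ Set.Ioo (0 : ℝ) 1 ∧ p.2 ∈ Set.Ioo (0 : ℝ) 1 ∧
      Gmap V₁ V₂ V₃ V₄ p.1 p.2 = 0 := by
  obtain ⟨x1, y1⟩ := V₁; obtain ⟨x2, y2⟩ := V₂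
  obtain ⟨x3, y3⟩ := V₃; obtain ⟨x4, y4⟩ := V₄
  simp only [det2] at h12 h34 h13 h24 hx
  have hGiff : ∀ s t : ℝ, Gmap (x1,y1) (x2,y2) (x3,y3) (x4,y4) s t = 0 ↔
      (t*(s*x1+(1-s)*x2) + (1-t)*(s*x4+(1-s)*x3) = 0 ∧
       t*(s*y1+(1-s)*y2) + (1-t)*(s*y4+(1-s)*y3) = 0) := by
    intro s t
    have : Gmap (x1,y1) (x2,y2) (x3,y3) (x4,y4) s t =
        (t*(s*x1+(1-s)*x2) + (1-t)*(s*x4+(1-s)*x3),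
         t*(s*y1+(1-s)*y2) + (1-t)*(s*y4+(1-s)*y3)) := by
      simp only [Gmap, Prod.smul_mk, smul_eq_mul, Prod.mk_add_mk, Prod.mk.injEq]
      constructor <;> ring
    rw [this, Prod.mk_eq_zero]
  -- notation for the six determinants (plain terms)
  -- d12 = x1*y2-y1*x2, d13 = x1*y3-y1*x3, d14 = x1*y4-y1*x4,
  -- d23 = x2*y3-y2*x3, d24 = x2*y4-y2*x4, d34 = x3*y4-y3*x4
  have hd23ne : (x2*y3-y2*x3) ≠ 0 := by
    intro h; rw [h] at hx; simp at hx
  -- IVT: find s ∈ (0,1) with q(s)=0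
  have hqcont : Continuous (fun z : ℝ => z^2*(x1*y4-y1*x4) +
      z*(1-z)*((x1*y3-y1*x3)+(x2*y4-y2*x4)) + (1-z)^2*(x2*y3-y2*x3)) := by fun_prop
  have hroot : ∃ s : ℝ, s ∈ Set.Ioo (0:ℝ) 1 ∧
      s^2*(x1*y4-y1*x4) + s*(1-s)*((x1*y3-y1*x3)+(x2*y4-y2*x4)) +
        (1-s)^2*(x2*y3-y2*x3) = 0 := by
    set f := fun z : ℝ => z^2*(x1*y4-y1*x4) +
      z*(1-z)*((x1*y3-y1*x3)+(x2*y4-y2*x4)) + (1-z)^2*(x2*y3-y2*x3) with hf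
    have hf0 : f 0 = x2*y3-y2*x3 := by simp [hf]
    have hf1 : f 1 = x1*y4-y1*x4 := by simp [hf]
    rcases lt_or_gt_of_ne hd23ne with hneg | hpos
    · -- d23 < 0 so d14 > 0 : f 0 < 0 < f 1
      have h14pos : 0 < x1*y4-y1*x4 := by nlinarith
      have := intermediate_value_Ioo (by norm_num : (0:ℝ) ≤ 1) hqcont.continuousOn
      have hmem : (0:ℝ) ∈ Set.Ioo (f 0) (f 1) := by rw [hf0, hf1]; exact ⟨hneg, h14pos⟩
      obtain ⟨s, hs, hfs⟩ := this hmem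
      exact ⟨s, hs, hfs⟩
    · -- d23 > 0 so d14 < 0 : f 1 < 0 < f 0
      have h14neg : x1*y4-y1*x4 < 0 := by nlinarith
      have := intermediate_value_Ioo' (by norm_num : (0:ℝ) ≤ 1) hqcont.continuousOn
      have hmem : (0:ℝ) ∈ Set.Ioo (f 1) (f 0) := by rw [hf0, hf1]; exact ⟨h14neg, hpos⟩
      obtain ⟨s, hs, hfs⟩ := this hmem
      exact ⟨s, hs, hfs⟩
  obtain ⟨s, ⟨hs0, hs1⟩, hqs⟩ := hroot
  -- A(s) and B(s)
  have hdetAB : (s*x1+(1-s)*x2)*(s*y4+(1-s)*y3) - (s*y1+(1-s)*y2)*(s*x4+(1-s)*x3) = 0 := by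
    linear_combination hqs
  have hBne : ¬((s*x4+(1-s)*x3) = 0 ∧ (s*y4+(1-s)*y3) = 0) := by
    rintro ⟨hb1, hb2⟩
    have hid : (1-s)*(x3*y4-y3*x4) = 0 := by linear_combination y4*hb1 - x4*hb2
    nlinarith
  obtain ⟨l, hl1, hl2⟩ := parallel_scalar _ _ _ _ hdetAB hBne
  have hlneg : l < 0 := by
    rcases lt_or_gt_of_ne hd23ne with hneg | hpos
    · -- d23 < 0 : use W = V₃
      have e3 : s*(x1*y3-y1*x3) + (1-s)*(x2*y3-y2*x3) = l * (-(s*(x3*y4-y3*x4))) := by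
        linear_combination y3*hl1 - x3*hl2
      nlinarith [mul_pos hs0 (by linarith : (0:ℝ) < -(x3*y4-y3*x4)),
        mul_pos hs0 (by linarith : (0:ℝ) < -(x1*y3-y1*x3)),
        mul_pos (by linarith : (0:ℝ) < 1-s) (by linarith : (0:ℝ) < -(x2*y3-y2*x3))]
    · -- d23 > 0 : use W = V₂
      have e3 : s*(x1*y2-y1*x2) = l * (-(s*(x2*y4-y2*x4)+(1-s)*(x2*y3-y2*x3))) := by
        linear_combination y2*hl1 - x2*hl2
      nlinarith [mul_pos hs0 h12, mul_pos hs0 h24,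
        mul_pos (by linarith : (0:ℝ) < 1-s) hpos]
  have h1l : (0:ℝ) < 1 - l := by linarith
  refine ⟨(s, 1/(1-l)), ⟨⟨hs0, hs1⟩, ⟨by positivity, (div_lt_one h1l).mpr (by linarith)⟩, ?_⟩, ?_⟩
  · -- it is a zero
    have htsolve : (1/(1-l))*l + 1 - 1/(1-l) = 0 := by
      field_simp
      ring
    refine (hGiff s (1/(1-l))).mpr ⟨?_, ?_⟩
    · linear_combination (1/(1-l))*hl1 + (s*x4+(1-s)*x3)*htsolve
    · linear_combination (1/(1-l))*hl2 + (s*y4+(1-s)*y3)*htsolve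
  · -- uniqueness
    rintro ⟨s', t'⟩ ⟨⟨hs'0, hs'1⟩, ⟨ht'0, ht'1⟩, hG'⟩
    obtain ⟨hE1, hE2⟩ := (hGiff s' t').mp hG'
    have hqs' : s'^2*(x1*y4-y1*x4) + s'*(1-s')*((x1*y3-y1*x3)+(x2*y4-y2*x4)) +
        (1-s')^2*(x2*y3-y2*x3) = 0 := by
      have h0 : t' * (s'^2*(x1*y4-y1*x4) + s'*(1-s')*((x1*y3-y1*x3)+(x2*y4-y2*x4)) +
          (1-s')^2*(x2*y3-y2*x3)) = 0 := by
        linear_combination (s'*y4+(1-s')*y3) * hE1 - (s'*x4+(1-s')*x3) * hE2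
      rcases mul_eq_zero.mp h0 with h | h
      · exact absurd h (ne_of_gt ht'0)
      · exact h
    -- s' = s via quadratic uniqueness
    have hseq : s' = s := by
      have h14s : (x2*y3-y2*x3) * ((((x1*y4-y1*x4) - ((x1*y3-y1*x3)+(x2*y4-y2*x4)) +
          (x2*y3-y2*x3))) + ((((x1*y3-y1*x3)+(x2*y4-y2*x4)) - 2*(x2*y3-y2*x3))) +
          ((x2*y3-y2*x3))) < 0 := by nlinarith [hx]
      exact quad_unique ((x1*y4-y1*x4) - ((x1*y3-y1*x3)+(x2*y4-y2*x4)) + (x2*y3-y2*x3))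
        (((x1*y3-y1*x3)+(x2*y4-y2*x4)) - 2*(x2*y3-y2*x3)) (x2*y3-y2*x3) s s'
        (by linear_combination hqs) (by linear_combination hqs') hs0 hs1 hs'0 hs'1 h14s
    subst hseq
    -- now t' = t
    have hG1 : (1/(1-l))*(s'*x1+(1-s')*x2) + (1-1/(1-l))*(s'*x4+(1-s')*x3) = 0 := by
      have htsolve : (1/(1-l))*l + 1 - 1/(1-l) = 0 := by field_simp; ring
      linear_combination (1/(1-l))*hl1 + (s'*x4+(1-s')*x3)*htsolve
    have hG2 : (1/(1-l))*(s'*y1+(1-s')*y2) + (1-1/(1-l))*(s'*y4+(1-s')*y3) = 0 := by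
      have htsolve : (1/(1-l))*l + 1 - 1/(1-l) = 0 := by field_simp; ring
      linear_combination (1/(1-l))*hl2 + (s'*y4+(1-s')*y3)*htsolve
    have hteq : t' = 1/(1-l) := by
      by_contra hne
      have hAB1 : (t' - 1/(1-l)) * ((s'*x1+(1-s')*x2) - (s'*x4+(1-s')*x3)) = 0 := by
        linear_combination hE1 - hG1
      have hAB2 : (t' - 1/(1-l)) * ((s'*y1+(1-s')*y2) - (s'*y4+(1-s')*y3)) = 0 := by
        linear_combination hE2 - hG2
      have htne : t' - 1/(1-l) ≠ 0 := sub_ne_zero.mpr hne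
      have hA1 : (s'*x1+(1-s')*x2) - (s'*x4+(1-s')*x3) = 0 :=
        (mul_eq_zero.mp hAB1).resolve_left htne
      have hA2 : (s'*y1+(1-s')*y2) - (s'*y4+(1-s')*y3) = 0 :=
        (mul_eq_zero.mp hAB2).resolve_left htne
      have hB1 : s'*x4+(1-s')*x3 = 0 := by linear_combination hE1 - t'*hA1
      have hB2 : s'*y4+(1-s')*y3 = 0 := by linear_combination hE2 - t'*hA2
      have hz : (1-s')*(x3*y4-y3*x4) = 0 := by linear_combination y4*hB1 - x4*hB2
      have hz2 := mul_neg_of_pos_of_neg (show (0:ℝ) < 1-s' by linarith) h34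
      linarith
    rw [Prod.mk.injEq]
    exact ⟨rfl, hteq⟩

lemma det2_swap (U W : ℝ × ℝ) : det2 U.swap W.swap = - det2 U W := by
  simp [det2, Prod.swap]

lemma Gmap_swap (V₁ V₂ V₃ V₄ : ℝ × ℝ) (s t : ℝ) :
    Gmap V₁.swap V₂.swap V₃.swap V₄.swap s t = (Gmap V₁ V₂ V₃ V₄ s t).swap := by
  simp only [Gmap, Prod.ext_iff]
  constructor <;> simp

set_option maxHeartbeats 1000000 in
/-- Crossed case with χ₁ an edge (δ₁δ₄ > 0, δ₂δ₃ > 0, δ₁δ₂ < 0): if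
det(V₁,V₂)·det(V₃,V₄) < 0 and det(V₂,V₃)·det(V₄,V₁) > 0, then the canopy map has
exactly one zero in (0,1)², i.e. a unique sliding vector field on Λ. -/
theorem stmt10 (V₁ V₂ V₃ V₄ : ℝ × ℝ) (χ₁ χ₂ χ₃ χ₄ : ℝ × ℝ) (δ₁ δ₂ δ₃ δ₄ : ℝ)
    (hχ₁ : χ₁ = V₂ - V₁) (hχ₂ : χ₂ = V₃ - V₂) (hχ₃ : χ₃ = V₄ - V₃) (hχ₄ : χ₄ = V₁ - V₄)
    (hδ₁ : δ₁ = det2 χ₁ χ₂) (hδ₂ : δ₂ = det2 χ₂ χ₃)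
    (hδ₃ : δ₃ = det2 χ₃ χ₄) (hδ₄ : δ₄ = det2 χ₄ χ₁)
    (hcr₁ : 0 < δ₁ * δ₄) (hcr₂ : 0 < δ₂ * δ₃) (hcr₃ : δ₁ * δ₂ < 0)
    (hc₁ : det2 V₁ V₂ * det2 V₃ V₄ < 0) (hc₂ : 0 < det2 V₂ V₃ * det2 V₄ V₁) :
    ∃! p : ℝ × ℝ, p.1 ∈ Set.Ioo (0 : ℝ) 1 ∧ p.2 ∈ Set.Ioo (0 : ℝ) 1 ∧
      Gmap V₁ V₂ V₃ V₄ p.1 p.2 = 0 := by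
  subst hχ₁ hχ₂ hχ₃ hχ₄ hδ₁ hδ₂ hδ₃ hδ₄
  -- express δ's in terms of vertex determinants
  have hδ₁d : det2 (V₂ - V₁) (V₃ - V₂) = det2 V₁ V₂ - det2 V₁ V₃ + det2 V₂ V₃ := by
    simp [det2]; ring
  have hδ₂d : det2 (V₃ - V₂) (V₄ - V₃) = det2 V₂ V₃ - det2 V₂ V₄ + det2 V₃ V₄ := by
    simp [det2]; ring
  have hδ₃d : det2 (V₄ - V₃) (V₁ - V₄) = det2 V₁ V₃ - det2 V₁ V₄ + det2 V₃ V₄ := by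
    simp [det2]; ring
  have hδ₄d : det2 (V₁ - V₄) (V₂ - V₁) = det2 V₁ V₂ + det2 V₂ V₄ - det2 V₁ V₄ := by
    simp [det2]; ring
  simp only [hδ₁d, hδ₂d, hδ₃d, hδ₄d] at hcr₁ hcr₂ hcr₃
  have hP : det2 V₁ V₂ * det2 V₃ V₄ - det2 V₁ V₃ * det2 V₂ V₄ +
      det2 V₁ V₄ * det2 V₂ V₃ = 0 := by
    simp [det2]; ring
  have hc₂' : det2 V₂ V₃ * det2 V₁ V₄ < 0 := by
    have h41 : det2 V₄ V₁ = - det2 V₁ V₄ := by simp [det2]; ring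
    rw [h41] at hc₂; nlinarith
  have hδ₁ne : det2 V₁ V₂ - det2 V₁ V₃ + det2 V₂ V₃ ≠ 0 := by
    intro h; rw [h] at hcr₃; simp at hcr₃
  rcases lt_or_gt_of_ne hδ₁ne with hneg | hpos
  · -- δ₁ < 0 : apply aux to swapped vectors
    have he2 : 0 < det2 V₂ V₃ - det2 V₂ V₄ + det2 V₃ V₄ := by nlinarith
    have he3 : 0 < det2 V₁ V₃ - det2 V₁ V₄ + det2 V₃ V₄ := by nlinarith
    have he4 : det2 V₁ V₂ + det2 V₂ V₄ - det2 V₁ V₄ < 0 := by nlinarith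
    obtain ⟨s13, s24, s12, s34⟩ := sign_lemma (-(det2 V₁ V₂)) (-(det2 V₁ V₃))
      (-(det2 V₁ V₄)) (-(det2 V₂ V₃)) (-(det2 V₂ V₄)) (-(det2 V₃ V₄))
      (by nlinarith) (by nlinarith) (by nlinarith)
      (by nlinarith) (by nlinarith) (by nlinarith) (by nlinarith)
    have hmain := main_aux V₁.swap V₂.swap V₃.swap V₄.swap
      (by rw [det2_swap]; linarith) (by rw [det2_swap]; linarith)
      (by rw [det2_swap]; linarith) (by rw [det2_swap]; linarith)
      (by rw [det2_swap, det2_swap]; nlinarith)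
    refine (existsUnique_congr (fun p => ?_)).mp hmain
    rw [Gmap_swap]
    constructor
    · rintro ⟨h1, h2, h3⟩
      exact ⟨h1, h2, by
        have := h3
        rwa [Prod.swap_eq_iff_eq_swap] at this⟩
    · rintro ⟨h1, h2, h3⟩
      exact ⟨h1, h2, by rw [h3]; rfl⟩
  · -- δ₁ > 0 : apply aux directly
    have he2 : det2 V₂ V₃ - det2 V₂ V₄ + det2 V₃ V₄ < 0 := by nlinarith
    have he3 : det2 V₁ V₃ - det2 V₁ V₄ + det2 V₃ V₄ < 0 := by nlinarith
    have he4 : 0 < det2 V₁ V₂ + det2 V₂ V₄ - det2 V₁ V₄ := by nlinarith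
    obtain ⟨s13, s24, s12, s34⟩ := sign_lemma (det2 V₁ V₂) (det2 V₁ V₃) (det2 V₁ V₄)
      (det2 V₂ V₃) (det2 V₂ V₄) (det2 V₃ V₄) hP hc₁ hc₂' hpos he2 he3 he4
    exact main_aux V₁ V₂ V₃ V₄ s12 s34 s13 s24 hc₂'
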